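/- arXiv:2002.00483 — 3 statements merged into one kernel-verified Lean document; each statement's English description precedes it below -/
import Mathlib

section
/- Let N be a normal network on X, where |X| ≥ 2. Then N has either a cherry or a reticulated cherry. -/
/-- A (raw) phylogenetic network structure: a vertex type, an arc relation
(arcs are directed; since `arc` is a relation there are no parallel arcs),
and a labelling of the (potential) leaves by elements of `α`. -/
structure PhyloNet (α : Type) : Type 1 where
  V : Type
  arc : V → V → Prop
  leafMap : α → V

namespace PhyloNet

variable {α : Type}

/-- In-degree of a vertex. -/
noncomputable def inDeg (N : PhyloNet α) (v : N.V) : ℕ := {u : N.V | N.arc u v}.ncard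

/-- Out-degree of a vertex. -/
noncomputable def outDeg (N : PhyloNet α) (v : N.V) : ℕ := {u : N.V | N.arc v u}.ncard

/-- A leaf is a vertex of out-degree zero. -/
def IsLeaf (N : PhyloNet α) (v : N.V) : Prop := N.outDeg v = 0

/-- A reticulation is a vertex of in-degree two. -/
def IsRet (N : PhyloNet α) (v : N.V) : Prop := N.inDeg v = 2

/-- A tree vertex has in-degree one and out-degree two. -/
def IsTreeVert (N : PhyloNet α) (v : N.V) : Prop := N.inDeg v = 1 ∧ N.outDeg v = 2

/-- A root: in-degree zero and every vertex is reachable from it. -/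
def IsRoot (N : PhyloNet α) (r : N.V) : Prop :=
  N.inDeg r = 0 ∧ ∀ v : N.V, Relation.ReflTransGen N.arc r v

/-- `N` is a rooted binary phylogenetic network on the (nonempty, finite) leaf set `X`. -/
structure IsNetworkOn (N : PhyloNet α) (X : Finset α) : Prop where
  nonemptyX : X.Nonempty
  finiteV : Finite N.V
  acyclic : ∀ v : N.V, ¬ Relation.TransGen N.arc v v
  rooted : ∃ r : N.V, N.IsRoot r
  leaf_isLeaf : ∀ x ∈ X, N.IsLeaf (N.leafMap x)
  leaf_inj : ∀ x ∈ X, ∀ y ∈ X, N.leafMap x = N.leafMap y → x = y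
  leaf_surj : ∀ v : N.V, N.IsLeaf v → ∃ x ∈ X, N.leafMap x = v
  degrees : (X.card = 1 ∧ Subsingleton N.V) ∨
    (∀ v : N.V,
      (N.inDeg v = 0 ∧ N.outDeg v = 2) ∨ (N.inDeg v = 1 ∧ N.outDeg v = 0) ∨
      (N.inDeg v = 1 ∧ N.outDeg v = 2) ∨ (N.inDeg v = 2 ∧ N.outDeg v = 1))

/-- A phylogenetic tree is a phylogenetic network with no reticulations. -/
def IsTree (N : PhyloNet α) : Prop := ∀ v : N.V, ¬ N.IsRet v

/-- Tree-child: every non-leaf vertex has a child that is not a reticulation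
(i.e. a child that is a tree vertex or a leaf). -/
def TreeChild (N : PhyloNet α) : Prop :=
  ∀ v : N.V, ¬ N.IsLeaf v → ∃ w : N.V, N.arc v w ∧ ¬ N.IsRet w

/-- A shortcut: a reticulation arc `(u, v)` such that there is a directed path
from `u` to `v` avoiding the arc `(u, v)`. -/
def Shortcut (N : PhyloNet α) (u v : N.V) : Prop :=
  N.arc u v ∧ N.IsRet v ∧
    Relation.TransGen (fun p q => N.arc p q ∧ ¬(p = u ∧ q = v)) u v

/-- Normal: tree-child with no shortcuts. -/
def Normal (N : PhyloNet α) : Prop := N.TreeChild ∧ ∀ u v : N.V, ¬ N.Shortcut u v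

/-- Temporal: there is a time map, with positive values, that is constant on
reticulation arcs and strictly increasing on tree arcs. -/
def Temporal (N : PhyloNet α) : Prop :=
  ∃ t : N.V → ℝ, (∀ v : N.V, 0 < t v) ∧
    ∀ u v : N.V, N.arc u v → ((N.IsRet v → t u = t v) ∧ (¬ N.IsRet v → t u < t v))

/-- A system of directed paths in `N` with prescribed endpoints, pairwise
internally vertex-disjoint (two different paths meet only in common endpoints). -/
def PathSys (N : PhyloNet α) (es : List (N.V × N.V)) : Prop :=
  ∃ P : N.V × N.V → List N.V,
    (∀ e ∈ es, (P e).Chain' N.arc ∧ (P e).head? = some e.1 ∧ (P e).getLast? = some e.2) ∧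
    (∀ e ∈ es, ∀ e' ∈ es, e ≠ e' → ∀ w ∈ P e, w ∈ P e' →
      (w = e.1 ∨ w = e.2) ∧ (w = e'.1 ∨ w = e'.2))

/-- `N` displays the triple `xy|z`: a subdivision of the caterpillar `(x, y, z)`
is a subgraph of `N`. -/
def DisplaysTriple (N : PhyloNet α) (X : Finset α) (x y z : α) : Prop :=
  x ∈ X ∧ y ∈ X ∧ z ∈ X ∧ x ≠ y ∧ x ≠ z ∧ y ≠ z ∧
  ∃ r v : N.V, ([r, v, N.leafMap x, N.leafMap y, N.leafMap z]).Pairwise (· ≠ ·) ∧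
    N.PathSys [(r, v), (v, N.leafMap x), (v, N.leafMap y), (r, N.leafMap z)]

/-- `N` displays the quad (caterpillar) `(x₁, x₂, x₃, x₄)`: a subdivision of the
caterpillar on four leaves is a subgraph of `N`. -/
def DisplaysQuad (N : PhyloNet α) (X : Finset α) (x₁ x₂ x₃ x₄ : α) : Prop :=
  x₁ ∈ X ∧ x₂ ∈ X ∧ x₃ ∈ X ∧ x₄ ∈ X ∧
  x₁ ≠ x₂ ∧ x₁ ≠ x₃ ∧ x₁ ≠ x₄ ∧ x₂ ≠ x₃ ∧ x₂ ≠ x₄ ∧ x₃ ≠ x₄ ∧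
  ∃ r q p : N.V,
    ([r, q, p, N.leafMap x₁, N.leafMap x₂, N.leafMap x₃, N.leafMap x₄]).Pairwise (· ≠ ·) ∧
    N.PathSys [(r, q), (q, p), (p, N.leafMap x₁), (p, N.leafMap x₂),
               (q, N.leafMap x₃), (r, N.leafMap x₄)]

/-- `N` displays the phylogenetic tree `T` with leaf set `X'`: a subdivision of
`T` is a subgraph of `N`, with the leaves labelled consistently. -/
def Displays (N T : PhyloNet α) (X' : Finset α) : Prop :=
  ∃ (f : T.V → N.V) (P : T.V → T.V → List N.V),
    Function.Injective f ∧
    (∀ x ∈ X', f (T.leafMap x) = N.leafMap x) ∧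
    (∀ u v : T.V, T.arc u v →
      (P u v).Chain' N.arc ∧ (P u v).head? = some (f u) ∧ (P u v).getLast? = some (f v)) ∧
    (∀ u v u' v' : T.V, T.arc u v → T.arc u' v' → (u, v) ≠ (u', v') →
      ∀ w : N.V, w ∈ P u v → w ∈ P u' v' →
        (w = f u ∨ w = f v) ∧ (w = f u' ∨ w = f v')) ∧
    (∀ u v w : T.V, T.arc u v → f w ∈ P u v → w = u ∨ w = v)

/-- Isomorphism of two phylogenetic networks on `X`: an arc-preserving bijection
of the vertex sets fixing every leaf label in `X`. -/
def Isom (N N' : PhyloNet α) (X : Finset α) : Prop :=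
  ∃ φ : N.V ≃ N'.V, (∀ x ∈ X, φ (N.leafMap x) = N'.leafMap x) ∧
    ∀ u v : N.V, N.arc u v ↔ N'.arc (φ u) (φ v)

/-- `{a, b}` is a cherry: the leaves `a` and `b` have the same parent. -/
def Cherry (N : PhyloNet α) (a b : α) : Prop :=
  a ≠ b ∧ ∃ p : N.V, N.arc p (N.leafMap a) ∧ N.arc p (N.leafMap b)

/-- `{a, b}` is a reticulated cherry with reticulation leaf `b`:
the parent of `b` is a reticulation and there is an arc from the parent of `a`
to the parent of `b`. -/
def RetCherry (N : PhyloNet α) (a b : α) : Prop :=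
  a ≠ b ∧ ∃ pa pb : N.V, N.arc pa (N.leafMap a) ∧ N.arc pb (N.leafMap b) ∧
    N.IsRet pb ∧ N.arc pa pb

/-- `{a, b, c}` is a double-reticulated cherry with reticulation leaf `b`. -/
def DoubleRetCherry (N : PhyloNet α) (a b c : α) : Prop :=
  a ≠ b ∧ b ≠ c ∧ a ≠ c ∧
  ∃ pa pb pc : N.V, N.arc pa (N.leafMap a) ∧ N.arc pb (N.leafMap b) ∧
    N.arc pc (N.leafMap c) ∧ N.IsRet pb ∧ N.arc pa pb ∧ N.arc pc pb

/-- There is a directed path from `a` to `b` that avoids the vertex `u` entirely. -/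
def AvoidReach (N : PhyloNet α) (u a b : N.V) : Prop :=
  a ≠ u ∧ b ≠ u ∧ Relation.ReflTransGen (fun p q => N.arc p q ∧ p ≠ u ∧ q ≠ u) a b

/-- The visibility set of a vertex `u`: the leaves `x ∈ X` such that every
directed path from the root to `x` traverses `u`. -/
def visSet (N : PhyloNet α) (X : Finset α) (u : N.V) : Set α :=
  {x | x ∈ X ∧ ∀ r : N.V, N.IsRoot r → ¬ N.AvoidReach u r (N.leafMap x)}

/-- The cluster set of a vertex `u`: the leaves `x ∈ X` reachable from `u`. -/
def clusterSet (N : PhyloNet α) (X : Finset α) (u : N.V) : Set α :=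
  {x | x ∈ X ∧ Relation.ReflTransGen N.arc u (N.leafMap x)}

/-- A tree path from `u` to `v`: a directed path in which every vertex except
`v` (and possibly `u`) is a tree vertex. -/
def TreePathTo (N : PhyloNet α) (u v : N.V) : Prop :=
  ∃ l : List N.V, l.Chain' N.arc ∧ l.head? = some u ∧ l.getLast? = some v ∧
    ∀ w ∈ l, w ≠ u → w ≠ v → N.IsTreeVert w

/-- A candidate set for `b` (relative to `a`). -/
def CandidateSet (N : PhyloNet α) (X : Finset α) (a b : α) (W : Set α) : Prop :=
  W.Nonempty ∧ W ⊆ (↑X : Set α) \ {a, b} ∧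
  (∀ c ∈ W, ∀ x ∈ X, x ∉ W → x ≠ b →
    N.DisplaysTriple X b c x ∧ ¬ N.DisplaysTriple X a c b) ∧
  (∀ c ∈ W, ∀ c' ∈ W, c ≠ c' → ¬ N.DisplaysTriple X b c c') ∧
  (∀ c ∈ W, ∀ x ∈ X, x ∉ W → x ≠ a → x ≠ b → ¬ N.DisplaysQuad X x b c a)

/-- `N'` is obtained from `N` by deleting the leaf `b` of the cherry `{a, b}`
(with common parent `p`): delete `b` and its incident arc, and suppress `p`. -/
def DelCherry (N N' : PhyloNet α) (X : Finset α) (a b : α) : Prop :=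
  ∃ (p : N.V) (j : N'.V → N.V),
    N.arc p (N.leafMap a) ∧ N.arc p (N.leafMap b) ∧
    Function.Injective j ∧
    (∀ x ∈ X, x ≠ b → j (N'.leafMap x) = N.leafMap x) ∧
    (∀ v : N.V, v ≠ p → v ≠ N.leafMap b → ∃ w : N'.V, j w = v) ∧
    (∀ w : N'.V, j w ≠ p ∧ j w ≠ N.leafMap b) ∧
    (∀ u v : N'.V, N'.arc u v ↔
      (N.arc (j u) (j v) ∨ (N.arc (j u) p ∧ N.arc p (j v))))

/-- `N'` is obtained from `N` by deleting the reticulation leaf `b` of the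
reticulated cherry `{a, b}`: delete `b`, its parent `pb` and their incident
arcs, and suppress the parent `pa` of `a` and the other parent `gb` of `pb`. -/
def DelRetCherry (N N' : PhyloNet α) (X : Finset α) (a b : α) : Prop :=
  ∃ (pa pb gb : N.V) (j : N'.V → N.V),
    N.arc pa (N.leafMap a) ∧ N.arc pb (N.leafMap b) ∧ N.IsRet pb ∧
    N.arc pa pb ∧ N.arc gb pb ∧ gb ≠ pa ∧
    Function.Injective j ∧
    (∀ x ∈ X, x ≠ b → j (N'.leafMap x) = N.leafMap x) ∧
    (∀ v : N.V, v ∉ ({pa, pb, gb, N.leafMap b} : Set N.V) → ∃ w : N'.V, j w = v) ∧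
    (∀ w : N'.V, j w ∉ ({pa, pb, gb, N.leafMap b} : Set N.V)) ∧
    (∀ u v : N'.V, N'.arc u v ↔
      (N.arc (j u) (j v) ∨ (N.arc (j u) pa ∧ N.arc pa (j v)) ∨
       (N.arc (j u) gb ∧ N.arc gb (j v))))

/-- `N'` is obtained from `N` by deleting the reticulation leaf `b` of the
double-reticulated cherry `{a, b, c}`: delete `b`, `pb` and their incident
arcs, and suppress `pa` and `pc`. -/
def DelDoubleRetCherry (N N' : PhyloNet α) (X : Finset α) (a b c : α) : Prop :=
  ∃ (pa pb pc : N.V) (j : N'.V → N.V),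
    N.arc pa (N.leafMap a) ∧ N.arc pb (N.leafMap b) ∧ N.arc pc (N.leafMap c) ∧
    N.IsRet pb ∧ N.arc pa pb ∧ N.arc pc pb ∧
    Function.Injective j ∧
    (∀ x ∈ X, x ≠ b → j (N'.leafMap x) = N.leafMap x) ∧
    (∀ v : N.V, v ∉ ({pa, pb, pc, N.leafMap b} : Set N.V) → ∃ w : N'.V, j w = v) ∧
    (∀ w : N'.V, j w ∉ ({pa, pb, pc, N.leafMap b} : Set N.V)) ∧
    (∀ u v : N'.V, N'.arc u v ↔
      (N.arc (j u) (j v) ∨ (N.arc (j u) pa ∧ N.arc pa (j v)) ∨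
       (N.arc (j u) pc ∧ N.arc pc (j v))))

end PhyloNet

open PhyloNet in
/-- A normal network with at least two leaves has a cherry or a
reticulated cherry. -/
theorem normal_has_cherry_or_retCherry {α : Type} (X : Finset α) (N : PhyloNet α)
    (hN : N.IsNetworkOn X) (hnorm : N.Normal) (hX : 2 ≤ X.card) :
    (∃ a ∈ X, ∃ b ∈ X, N.Cherry a b) ∨ (∃ a ∈ X, ∃ b ∈ X, N.RetCherry a b) := by
  classical
  obtain ⟨hne, hfin, hacyc, ⟨r0, hr0⟩, hleaf, hinj, hsurj, hdeg⟩ := hN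
  have hdeg : ∀ v : N.V,
      (N.inDeg v = 0 ∧ N.outDeg v = 2) ∨ (N.inDeg v = 1 ∧ N.outDeg v = 0) ∨
      (N.inDeg v = 1 ∧ N.outDeg v = 2) ∨ (N.inDeg v = 2 ∧ N.outDeg v = 1) := by
    rcases hdeg with ⟨h1, _⟩ | h
    · omega
    · exact h
  -- the root has out-degree 2
  have hr2 : N.outDeg r0 = 2 := by
    rcases hdeg r0 with h | h | h | h <;> first
      | exact h.2
      | (exfalso; have := hr0.1; omega)
  haveI := hfin
  -- pick a lowest vertex of out-degree 2
  have hwf : WellFounded (fun a b : N.V => Relation.TransGen N.arc b a) := by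
    haveI : IsTrans N.V (fun a b : N.V => Relation.TransGen N.arc b a) :=
      ⟨fun _ _ _ h1 h2 => h2.trans h1⟩
    haveI : IsIrrefl N.V (fun a b : N.V => Relation.TransGen N.arc b a) :=
      ⟨fun a h => hacyc a h⟩
    exact Finite.wellFounded_of_trans_of_irrefl _
  obtain ⟨u, huS, humax⟩ := hwf.has_min {v : N.V | N.outDeg v = 2} ⟨r0, hr2⟩
  have huS2 : N.outDeg u = 2 := huS
  -- classification of vertices strictly below u
  have key : ∀ c : N.V, Relation.TransGen N.arc u c →
      (N.inDeg c = 1 ∧ N.outDeg c = 0) ∨ (N.inDeg c = 2 ∧ N.outDeg c = 1) := by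
    intro c htc
    rcases hdeg c with h | h | h | h
    · exact absurd htc (humax c h.2)
    · exact Or.inl h
    · exact absurd htc (humax c h.2)
    · exact Or.inr h
  -- the two children of u
  obtain ⟨w1, w2, hne12, hset⟩ := Set.ncard_eq_two.mp huS2
  have ha1 : N.arc u w1 := by
    have : w1 ∈ {w : N.V | N.arc u w} := by rw [hset]; simp
    exact this
  have ha2 : N.arc u w2 := by
    have : w2 ∈ {w : N.V | N.arc u w} := by rw [hset]; simp
    exact this
  -- tree-child at u
  have hunl : ¬ N.IsLeaf u := by
    intro h
    have : N.outDeg u = 0 := h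
    omega
  obtain ⟨w, hw, hwnr⟩ := hnorm.1 u hunl
  -- the main argument, for an arbitrary pair of distinct children with the
  -- first one not a reticulation
  have main : ∀ a b : N.V, a ≠ b → N.arc u a → N.arc u b → ¬ N.IsRet a →
      (∃ a ∈ X, ∃ b ∈ X, N.Cherry a b) ∨ (∃ a ∈ X, ∃ b ∈ X, N.RetCherry a b) := by
    intro a b hab hua hub hanr
    have hka := key a (Relation.TransGen.single hua)
    have haleaf : N.inDeg a = 1 ∧ N.outDeg a = 0 := by
      rcases hka with h | h
      · exact h
      · exact absurd h.1 hanr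
    obtain ⟨xa, hxaX, hxa⟩ := hsurj a haleaf.2
    rcases key b (Relation.TransGen.single hub) with hb | hb
    · -- b is a leaf: cherry
      obtain ⟨xb, hxbX, hxb⟩ := hsurj b hb.2
      have hxab : xa ≠ xb := by
        intro h; apply hab; rw [← hxa, ← hxb, h]
      exact Or.inl ⟨xa, hxaX, xb, hxbX, hxab, u, by rw [hxa]; exact hua,
        by rw [hxb]; exact hub⟩
    · -- b is a reticulation: its unique child is a leaf
      obtain ⟨c, hc⟩ := Set.ncard_eq_one.mp hb.2
      have hbc : N.arc b c := by
        have : c ∈ {w : N.V | N.arc b w} := by rw [hc]; simp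
        exact this
      have hbnl : ¬ N.IsLeaf b := by
        intro h
        have : N.outDeg b = 0 := h
        omega
      obtain ⟨c', hc', hcnr⟩ := hnorm.1 b hbnl
      have hcc : c' = c := by
        have : c' ∈ {w : N.V | N.arc b w} := hc'
        rw [hc] at this
        exact this
      rw [hcc] at hcnr
      have hkc := key c ((Relation.TransGen.single hub).tail hbc)
      have hcleaf : N.inDeg c = 1 ∧ N.outDeg c = 0 := by
        rcases hkc with h | h
        · exact h
        · exact absurd h.1 hcnr
      obtain ⟨xb, hxbX, hxb⟩ := hsurj c hcleaf.2
      have hac : a ≠ c := by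
        intro h
        obtain ⟨d, hd⟩ := Set.ncard_eq_one.mp haleaf.1
        have h1 : u ∈ {v : N.V | N.arc v a} := hua
        have h2 : b ∈ {v : N.V | N.arc v a} := by
          show N.arc b a; rw [h]; exact hbc
        rw [hd] at h1 h2
        have : u = b := by rw [Set.mem_singleton_iff] at h1 h2; rw [h1, h2]
        exact hacyc u (by rw [this] at hub ⊢; exact Relation.TransGen.single hub)
      have hxab : xa ≠ xb := by
        intro h; apply hac; rw [← hxa, ← hxb, h]
      exact Or.inr ⟨xa, hxaX, xb, hxbX, hxab, u, b,
        by rw [hxa]; exact hua, by rw [hxb]; exact hbc, hb.1, hub⟩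
  -- w is one of the two children
  have hw12 : w = w1 ∨ w = w2 := by
    have : w ∈ {x : N.V | N.arc u x} := hw
    rw [hset] at this
    exact this
  rcases hw12 with rfl | rfl
  · exact main w w2 hne12 ha1 ha2 hwnr
  · exact main w w1 hne12.symm ha2 ha1 hwnr
end

section
/- Let R and Q be the sets of triples and quads, respectively, displayed by a rooted binary phylogenetic network N on X, where |X| ≥ 3. Let a and b be distinct elements of X and let c ∈ X − {a, b}. If W is a candidate set for b containing c, then W is the unique candidate set for b containing c; that is, any candidate set for b containing c equals W. -/
open PhyloNet in
/-- A candidate set for `b` containing `c` is unique. -/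
theorem candidateSet_unique {α : Type} (X : Finset α) (N : PhyloNet α)
    (hN : N.IsNetworkOn X) (hX : 3 ≤ X.card)
    (a b c : α) (ha : a ∈ X) (hb : b ∈ X) (hc : c ∈ X)
    (hab : a ≠ b) (hca : c ≠ a) (hcb : c ≠ b)
    (W W' : Set α)
    (hW : N.CandidateSet X a b W) (hcW : c ∈ W)
    (hW' : N.CandidateSet X a b W') (hcW' : c ∈ W') :
    W' = W := by
  obtain ⟨-, hWsub, hWI, hWII, -⟩ := hW
  obtain ⟨-, hW'sub, hW'I, hW'II, -⟩ := hW'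
  ext x
  constructor
  · intro hx
    by_contra hxW
    obtain ⟨hxX, hxab⟩ := hW'sub hx
    have hxb : x ≠ b := fun h => hxab (by simp [h])
    have hcx : c ≠ x := fun h => hxW (h ▸ hcW)
    exact hW'II c hcW' x hx hcx (hWI c hcW x hxX hxW hxb).1
  · intro hx
    by_contra hxW'
    obtain ⟨hxX, hxab⟩ := hWsub hx
    have hxb : x ≠ b := fun h => hxab (by simp [h])
    have hcx : c ≠ x := fun h => hxW' (h ▸ hcW')
    exact hWII c hcW x hx hcx (hW'I c hcW' x hxX hxW' hxb).1
end

section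
/- Let N be a normal network on X, and let a and b be distinct elements of X such that {a, b} is either a cherry or a reticulated cherry of N in which b is the reticulation leaf. If N' is obtained from N by deleting b, then N' is a normal network on X − {b}. -/
namespace PhyloNet

section Aux

variable {α : Type} {N : PhyloNet α}

/-- Pointwise binary degree condition. -/
def GoodDeg (N : PhyloNet α) : Prop := ∀ v : N.V,
  (N.inDeg v = 0 ∧ N.outDeg v = 2) ∨ (N.inDeg v = 1 ∧ N.outDeg v = 0) ∨
  (N.inDeg v = 1 ∧ N.outDeg v = 2) ∨ (N.inDeg v = 2 ∧ N.outDeg v = 1)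

lemma goodDeg_of_two_leaves {X : Finset α} (hN : N.IsNetworkOn X) {a b : α}
    (ha : a ∈ X) (hb : b ∈ X) (hab : a ≠ b) : N.GoodDeg := by
  rcases hN.degrees with ⟨h1, _⟩ | h
  · exact absurd h1 (by have := Finset.one_lt_card.mpr ⟨a, ha, b, hb, hab⟩; omega)
  · exact h

lemma not_arc_of_outDeg_zero [Finite N.V] {v : N.V} (h : N.outDeg v = 0) (u : N.V) :
    ¬ N.arc v u := by
  intro ha
  have he : {u : N.V | N.arc v u} = ∅ := (Set.ncard_eq_zero (Set.toFinite _)).mp h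
  have : u ∈ {u : N.V | N.arc v u} := ha
  rw [he] at this; exact this

lemma not_arc_of_inDeg_zero [Finite N.V] {v : N.V} (h : N.inDeg v = 0) (u : N.V) :
    ¬ N.arc u v := by
  intro ha
  have he : {u : N.V | N.arc u v} = ∅ := (Set.ncard_eq_zero (Set.toFinite _)).mp h
  have : u ∈ {u : N.V | N.arc u v} := ha
  rw [he] at this; exact this

lemma inDeg_ne_zero [Finite N.V] {u v : N.V} (h : N.arc u v) : N.inDeg v ≠ 0 :=
  fun h0 => not_arc_of_inDeg_zero h0 u h

lemma outDeg_ne_zero [Finite N.V] {u v : N.V} (h : N.arc u v) : N.outDeg u ≠ 0 :=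
  fun h0 => not_arc_of_outDeg_zero h0 v h

lemma parent_unique [Finite N.V] {v u u' : N.V} (h : N.inDeg v = 1)
    (ha : N.arc u v) (ha' : N.arc u' v) : u = u' := by
  obtain ⟨x, hx⟩ := Set.ncard_eq_one.mp h
  have h1 : u ∈ {u : N.V | N.arc u v} := ha
  have h2 : u' ∈ {u : N.V | N.arc u' v} := ha'
  rw [hx] at h1
  have h2 : u' ∈ {u : N.V | N.arc u v} := ha'
  rw [hx] at h2
  simp only [Set.mem_singleton_iff] at h1 h2
  rw [h1, h2]

lemma child_unique [Finite N.V] {v u u' : N.V} (h : N.outDeg v = 1)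
    (ha : N.arc v u) (ha' : N.arc v u') : u = u' := by
  obtain ⟨x, hx⟩ := Set.ncard_eq_one.mp h
  have h1 : u ∈ {u : N.V | N.arc v u} := ha
  have h2 : u' ∈ {u : N.V | N.arc v u} := ha'
  rw [hx] at h1 h2
  simp only [Set.mem_singleton_iff] at h1 h2
  rw [h1, h2]

lemma two_le_outDeg [Finite N.V] {v x y : N.V} (hx : N.arc v x) (hy : N.arc v y)
    (hxy : x ≠ y) : 2 ≤ N.outDeg v := by
  have hsub : ({x, y} : Set N.V) ⊆ {u | N.arc v u} := by
    rintro z hz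
    rcases hz with rfl | hz
    · exact hx
    · rw [Set.mem_singleton_iff] at hz; rw [hz]; exact hy
  calc 2 = ({x, y} : Set N.V).ncard := (Set.ncard_pair hxy).symm
    _ ≤ _ := Set.ncard_le_ncard hsub (Set.toFinite _)

lemma two_le_inDeg [Finite N.V] {v x y : N.V} (hx : N.arc x v) (hy : N.arc y v)
    (hxy : x ≠ y) : 2 ≤ N.inDeg v := by
  have hsub : ({x, y} : Set N.V) ⊆ {u | N.arc u v} := by
    rintro z hz
    rcases hz with rfl | hz
    · exact hx
    · rw [Set.mem_singleton_iff] at hz; rw [hz]; exact hy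
  calc 2 = ({x, y} : Set N.V).ncard := (Set.ncard_pair hxy).symm
    _ ≤ _ := Set.ncard_le_ncard hsub (Set.toFinite _)

lemma child_pair [Finite N.V] {v x y : N.V} (h : N.outDeg v = 2) (hx : N.arc v x)
    (hy : N.arc v y) (hxy : x ≠ y) {z : N.V} (hz : N.arc v z) : z = x ∨ z = y := by
  have hsub : ({x, y} : Set N.V) ⊆ {u | N.arc v u} := by
    rintro w hw
    rcases hw with rfl | hw
    · exact hx
    · rw [Set.mem_singleton_iff] at hw; rw [hw]; exact hy
  have heq : ({x, y} : Set N.V) = {u | N.arc v u} :=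
    Set.eq_of_subset_of_ncard_le hsub (by rw [Set.ncard_pair hxy]; exact h.le) (Set.toFinite _)
  have : z ∈ {u : N.V | N.arc v u} := hz
  rw [← heq] at this
  simpa using this

lemma parent_pair [Finite N.V] {v x y : N.V} (h : N.inDeg v = 2) (hx : N.arc x v)
    (hy : N.arc y v) (hxy : x ≠ y) {z : N.V} (hz : N.arc z v) : z = x ∨ z = y := by
  have hsub : ({x, y} : Set N.V) ⊆ {u | N.arc u v} := by
    rintro w hw
    rcases hw with rfl | hw
    · exact hx
    · rw [Set.mem_singleton_iff] at hw; rw [hw]; exact hy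
  have heq : ({x, y} : Set N.V) = {u | N.arc u v} :=
    Set.eq_of_subset_of_ncard_le hsub (by rw [Set.ncard_pair hxy]; exact h.le) (Set.toFinite _)
  have : z ∈ {u : N.V | N.arc u v} := hz
  rw [← heq] at this
  simpa using this

lemma no_self_arc {v : N.V} (hac : ∀ v : N.V, ¬ Relation.TransGen N.arc v v) :
    ¬ N.arc v v := fun h => hac v (Relation.TransGen.single h)

lemma eq_of_reach_inDeg_zero [Finite N.V] {r v : N.V}
    (h : Relation.ReflTransGen N.arc r v) (h0 : N.inDeg v = 0) : v = r := by
  rcases Relation.ReflTransGen.cases_tail h with rfl | ⟨c, _, hc⟩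
  · rfl
  · exact absurd hc (not_arc_of_inDeg_zero h0 c)

/-- Generic injectivity of a two-point update on a set avoiding the targets. -/
lemma injOn_update2 {V : Type} [DecidableEq V] {C : Set V} {s₁ s₂ t₁ t₂ : V}
    (h1 : t₁ ∉ C) (h2 : t₂ ∉ C) (h12 : t₁ ≠ t₂) :
    Set.InjOn (fun u => if u = s₁ then t₁ else if u = s₂ then t₂ else u) C := by
  intro u hu u' hu' h
  simp only at h
  split_ifs at h <;> subst_vars <;>
    first
      | rfl
      | exact absurd hu h1
      | exact absurd hu h2
      | exact absurd hu' h1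
      | exact absurd hu' h2
      | exact absurd h h12
      | exact absurd rfl h12
      | simp_all


lemma transfer [DecidableEq α] {X : Finset α} {a b : α} (hN : N.IsNetworkOn X) (hg : N.GoodDeg)
    (N' : PhyloNet α) (j : N'.V → N.V) (hj : Function.Injective j)
    (hcompat : ∀ x ∈ X, x ≠ b → j (N'.leafMap x) = N.leafMap x)
    (hnb : ∀ w : N'.V, j w ≠ N.leafMap b)
    (hdegIn : ∀ w, N'.inDeg w = N.inDeg (j w))
    (hdegOut : ∀ w, N'.outDeg w = N.outDeg (j w))
    (hpath : ∀ u v, N'.arc u v → Relation.TransGen N.arc (j u) (j v))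
    (hroot : ∃ r, N'.IsRoot r)
    (ha : a ∈ X) (hb : b ∈ X) (hab : a ≠ b) :
    N'.IsNetworkOn (X.erase b) := by
  have hfin : Finite N.V := hN.finiteV
  have hfin' : Finite N'.V := Finite.of_injective j hj
  refine ⟨⟨a, Finset.mem_erase.mpr ⟨hab, ha⟩⟩, hfin', ?_, hroot, ?_, ?_, ?_, ?_⟩
  · intro v hv
    exact hN.acyclic (j v) (Relation.TransGen.lift' j hpath _ _ hv)
  · intro x hx
    obtain ⟨hxb, hxX⟩ := Finset.mem_erase.mp hx
    show N'.outDeg _ = 0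
    rw [hdegOut, hcompat x hxX hxb]
    exact hN.leaf_isLeaf x hxX
  · intro x hx y hy hxy
    obtain ⟨hxb, hxX⟩ := Finset.mem_erase.mp hx
    obtain ⟨hyb, hyX⟩ := Finset.mem_erase.mp hy
    apply hN.leaf_inj x hxX y hyX
    rw [← hcompat x hxX hxb, ← hcompat y hyX hyb, hxy]
  · intro w hw
    have hl : N.IsLeaf (j w) := by show N.outDeg _ = 0; rw [← hdegOut]; exact hw
    obtain ⟨x, hxX, hx⟩ := hN.leaf_surj (j w) hl
    have hxb : x ≠ b := by rintro rfl; exact hnb w hx.symm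
    refine ⟨x, Finset.mem_erase.mpr ⟨hxb, hxX⟩, hj ?_⟩
    rw [hcompat x hxX hxb, hx]
  · right
    intro w
    rw [hdegIn, hdegOut]
    exact hg (j w)

end Aux

end PhyloNet

namespace PhyloNet

section Cherry

variable {α : Type} {N : PhyloNet α}

lemma injOn_update1 {V : Type} [DecidableEq V] {C : Set V} {s t : V} (h1 : t ∉ C) :
    Set.InjOn (fun u => if u = s then t else u) C := by
  intro u hu u' hu' h
  simp only at h
  split_ifs at h <;> subst_vars <;>
    first
      | rfl
      | exact absurd hu h1
      | exact absurd hu' h1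

lemma exists_unique_parent [Finite N.V] {v : N.V} (h : N.inDeg v = 1) :
    ∃ u, N.arc u v ∧ ∀ z, N.arc z v → z = u := by
  obtain ⟨x, hx⟩ := Set.ncard_eq_one.mp h
  refine ⟨x, ?_, fun z hz => ?_⟩
  · have : x ∈ {u : N.V | N.arc u v} := by rw [hx]; rfl
    exact this
  · have : z ∈ {u : N.V | N.arc u v} := hz
    rw [hx] at this; exact this

lemma delCherry_case [DecidableEq α] {X : Finset α} {N N' : PhyloNet α}
    (hN : N.IsNetworkOn X) (hnorm : N.Normal) {a b : α}
    (ha : a ∈ X) (hb : b ∈ X) (hab : a ≠ b)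
    (hdel : N.DelCherry N' X a b) :
    N'.IsNetworkOn (X.erase b) ∧ N'.Normal := by
  classical
  have hfin : Finite N.V := hN.finiteV
  have hg : N.GoodDeg := goodDeg_of_two_leaves hN ha hb hab
  obtain ⟨p, j, hpla, hplb, hj, hcompat, hsurj, havoid, harc⟩ := hdel
  set la := N.leafMap a with hla_def
  set lb := N.leafMap b with hlb_def
  have hlalb : la ≠ lb := fun h => hab (hN.leaf_inj a ha b hb h)
  have hla_leaf : N.outDeg la = 0 := hN.leaf_isLeaf a ha
  have hlb_leaf : N.outDeg lb = 0 := hN.leaf_isLeaf b hb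
  have hla_in : N.inDeg la = 1 := by
    rcases hg la with ⟨h1, h2⟩ | ⟨h1, h2⟩ | ⟨h1, h2⟩ | ⟨h1, h2⟩ <;> omega
  have hlb_in : N.inDeg lb = 1 := by
    rcases hg lb with ⟨h1, h2⟩ | ⟨h1, h2⟩ | ⟨h1, h2⟩ | ⟨h1, h2⟩ <;> omega
  have hpout : N.outDeg p = 2 := by
    have h2 := two_le_outDeg hpla hplb hlalb
    rcases hg p with ⟨h1, h2'⟩ | ⟨h1, h2'⟩ | ⟨h1, h2'⟩ | ⟨h1, h2'⟩ <;> omega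
  have hp_child : ∀ z, N.arc p z → z = la ∨ z = lb :=
    fun z hz => child_pair hpout hpla hplb hlalb hz
  have hp_ne_la : p ≠ la := fun h => not_arc_of_outDeg_zero hla_leaf la (h ▸ hpla)
  have hp_ne_lb : p ≠ lb := fun h => not_arc_of_outDeg_zero hlb_leaf la (h ▸ hpla)
  have hlb_par : ∀ z, N.arc z lb → z = p := fun z hz => parent_unique hlb_in hz hplb
  have hla_par : ∀ z, N.arc z la → z = p := fun z hz => parent_unique hla_in hz hpla
  have hpcases : N.inDeg p = 0 ∨ N.inDeg p = 1 := by
    rcases hg p with ⟨h1, h2⟩ | ⟨h1, h2⟩ | ⟨h1, h2⟩ | ⟨h1, h2⟩ <;> omega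
  obtain ⟨r, hr0, hrreach⟩ := hN.rooted
  rcases hpcases with hp0 | hp1
  · -- special case : p is the root, N is a single cherry
    have hrp : p = r := eq_of_reach_inDeg_zero (hrreach p) hp0
    have hreachp : ∀ v, Relation.ReflTransGen N.arc p v := by
      rw [hrp]; exact hrreach
    have hV : ∀ v : N.V, v = p ∨ v = la ∨ v = lb := by
      intro v
      have h := hreachp v
      induction h with
      | refl => exact Or.inl rfl
      | @tail u z hru huz ih =>
        rcases ih with rfl | rfl | rfl
        · rcases hp_child z huz with rfl | rfl
          · exact Or.inr (Or.inl rfl)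
          · exact Or.inr (Or.inr rfl)
        · exact absurd huz (not_arc_of_outDeg_zero hla_leaf z)
        · exact absurd huz (not_arc_of_outDeg_zero hlb_leaf z)
    have hjla : ∀ w : N'.V, j w = la := by
      intro w
      rcases hV (j w) with h | h | h
      · exact absurd h (havoid w).1
      · exact h
      · exact absurd h (havoid w).2
    have hsub : Subsingleton N'.V :=
      ⟨fun w w' => hj (by rw [hjla w, hjla w'])⟩
    have hnoarc : ∀ u v : N'.V, ¬ N'.arc u v := by
      intro u v h
      rcases (harc u v).mp h with h1 | ⟨h1, _⟩ <;> rw [hjla u] at h1 <;>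
        exact not_arc_of_outDeg_zero hla_leaf _ h1
    have hdegO : ∀ w : N'.V, N'.outDeg w = 0 := by
      intro w
      show Set.ncard _ = 0
      rw [Set.ncard_eq_zero (Set.toFinite _)]
      ext u; simp only [Set.mem_setOf_eq, Set.mem_empty_iff_false, iff_false]
      exact hnoarc w u
    have hdegI : ∀ w : N'.V, N'.inDeg w = 0 := by
      intro w
      show Set.ncard _ = 0
      rw [Set.ncard_eq_zero (Set.toFinite _)]
      ext u; simp only [Set.mem_setOf_eq, Set.mem_empty_iff_false, iff_false]
      exact hnoarc u w
    have hXab : X = {a, b} := by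
      ext x
      simp only [Finset.mem_insert, Finset.mem_singleton]
      constructor
      · intro hx
        have hleaf : N.outDeg (N.leafMap x) = 0 := hN.leaf_isLeaf x hx
        rcases hV (N.leafMap x) with h | h | h
        · rw [h] at hleaf; omega
        · exact Or.inl (hN.leaf_inj x hx a ha h)
        · exact Or.inr (hN.leaf_inj x hx b hb h)
      · rintro (rfl | rfl) <;> assumption
    have hXerase : X.erase b = {a} := by
      rw [hXab]; ext x
      simp only [Finset.mem_erase, Finset.mem_insert, Finset.mem_singleton]
      constructor
      · rintro ⟨h1, rfl | rfl⟩
        · rfl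
        · exact absurd rfl h1
      · rintro rfl; exact ⟨hab, Or.inl rfl⟩
    refine ⟨⟨⟨a, by rw [hXerase]; exact Finset.mem_singleton_self a⟩,
        Finite.of_injective j hj, ?_, ?_, ?_, ?_, ?_, ?_⟩, ?_, ?_⟩
    · intro v hv
      cases hv with
      | single h => exact hnoarc _ _ h
      | tail _ h => exact hnoarc _ _ h
    · exact ⟨N'.leafMap a, hdegI _, fun v => by
        rw [Subsingleton.elim v (N'.leafMap a)]⟩
    · intro x _; exact hdegO _
    · intro x hx y hy _
      rw [hXerase] at hx hy
      rw [Finset.mem_singleton] at hx hy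
      rw [hx, hy]
    · intro w _
      exact ⟨a, by rw [hXerase]; exact Finset.mem_singleton_self a, Subsingleton.elim _ _⟩
    · left
      exact ⟨by rw [hXerase]; exact Finset.card_singleton a, hsub⟩
    · intro w hw
      exact absurd (hdegO w) hw
    · rintro u v ⟨huv, _, _⟩
      exact hnoarc u v huv
  · -- general case : p has a parent q
    obtain ⟨q, hq, hq_uniq⟩ := exists_unique_parent hp1
    have hq_ne_p : q ≠ p := fun h => no_self_arc hN.acyclic (h ▸ hq)
    have hq_ne_lb : q ≠ lb := fun h => not_arc_of_outDeg_zero hlb_leaf p (h ▸ hq)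
    obtain ⟨wq, hwq⟩ := hsurj q hq_ne_p hq_ne_lb
    obtain ⟨wla, hwla⟩ := hsurj la (Ne.symm hp_ne_la) hlalb
    have hpath : ∀ u v, N'.arc u v → Relation.TransGen N.arc (j u) (j v) := by
      intro u v h
      rcases (harc u v).mp h with h1 | ⟨h1, h2⟩
      · exact Relation.TransGen.single h1
      · exact (Relation.TransGen.single h1).tail h2
    -- degree preservation
    have hdegOut : ∀ w, N'.outDeg w = N.outDeg (j w) := by
      intro w
      obtain ⟨hwp, hwlb⟩ := havoid w
      have hla_nC : la ∉ {u : N.V | N.arc (j w) u} := fun h => hwp (hla_par _ h)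
      have hCimg : j '' {w' : N'.V | N'.arc w w'} =
          (fun u => if u = p then la else u) '' {u : N.V | N.arc (j w) u} := by
        ext z
        simp only [Set.mem_image, Set.mem_setOf_eq]
        constructor
        · rintro ⟨w', hw', rfl⟩
          rcases (harc w w').mp hw' with h1 | ⟨h1, h2⟩
          · exact ⟨j w', h1, if_neg (havoid w').1⟩
          · have hjw' : j w' = la := by
              rcases hp_child _ h2 with h | h
              · exact h
              · exact absurd h (havoid w').2
            exact ⟨p, h1, by rw [if_pos rfl, hjw']⟩
        · rintro ⟨u, hu, rfl⟩
          by_cases hup : u = p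
          · subst hup
            rw [if_pos rfl]
            exact ⟨wla, (harc w wla).mpr (Or.inr ⟨hu, by rw [hwla]; exact hpla⟩), hwla⟩
          · rw [if_neg hup]
            have hulb : u ≠ lb := fun h => hwp (hlb_par _ (h ▸ hu))
            obtain ⟨w', hw'⟩ := hsurj u hup hulb
            exact ⟨w', (harc w w').mpr (Or.inl (by rw [hw']; exact hu)), hw'⟩
      show {u : N'.V | N'.arc w u}.ncard = {u : N.V | N.arc (j w) u}.ncard
      rw [← Set.ncard_image_of_injective {u : N'.V | N'.arc w u} hj, hCimg,
        Set.ncard_image_of_injOn (injOn_update1 hla_nC)]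
    have hdegIn : ∀ w, N'.inDeg w = N.inDeg (j w) := by
      intro w
      obtain ⟨hwp, hwlb⟩ := havoid w
      have hinjτ : Set.InjOn (fun u => if u = p then q else u) {u : N.V | N.arc u (j w)} := by
        intro x hx y hy hxy
        simp only [Set.mem_setOf_eq] at hx hy
        simp only at hxy
        by_cases hxp : x = p <;> by_cases hyp : y = p
        · rw [hxp, hyp]
        · exfalso
          apply hyp
          rw [if_pos hxp, if_neg hyp] at hxy
          have hvla : j w = la := by
            rcases hp_child _ (hxp ▸ hx) with h | h
            · exact h
            · exact absurd h hwlb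
          rw [← hxy] at hy
          exact absurd (hla_par q (hvla ▸ hy)) hq_ne_p
        · exfalso
          apply hxp
          rw [if_neg hxp, if_pos hyp] at hxy
          have hvla : j w = la := by
            rcases hp_child _ (hyp ▸ hy) with h | h
            · exact h
            · exact absurd h hwlb
          rw [hxy] at hx
          exact absurd (hla_par q (hvla ▸ hx)) hq_ne_p
        · rwa [if_neg hxp, if_neg hyp] at hxy
      have hPimg : j '' {u' : N'.V | N'.arc u' w} =
          (fun u => if u = p then q else u) '' {u : N.V | N.arc u (j w)} := by
        ext z
        simp only [Set.mem_image, Set.mem_setOf_eq]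
        constructor
        · rintro ⟨u', hu', rfl⟩
          rcases (harc u' w).mp hu' with h1 | ⟨h1, h2⟩
          · exact ⟨j u', h1, if_neg (havoid u').1⟩
          · exact ⟨p, h2, by rw [if_pos rfl, hq_uniq _ h1]⟩
        · rintro ⟨u, hu, rfl⟩
          by_cases hup : u = p
          · subst hup
            rw [if_pos rfl]
            exact ⟨wq, (harc wq w).mpr (Or.inr ⟨by rw [hwq]; exact hq, hu⟩), hwq⟩
          · rw [if_neg hup]
            have hula : u ≠ la := fun h => not_arc_of_outDeg_zero hla_leaf _ (h ▸ hu)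
            have hulb : u ≠ lb := fun h => not_arc_of_outDeg_zero hlb_leaf _ (h ▸ hu)
            obtain ⟨w', hw'⟩ := hsurj u hup hulb
            exact ⟨w', (harc w' w).mpr (Or.inl (by rw [hw']; exact hu)), hw'⟩
      show {u : N'.V | N'.arc u w}.ncard = {u : N.V | N.arc u (j w)}.ncard
      rw [← Set.ncard_image_of_injective {u : N'.V | N'.arc u w} hj, hPimg,
        Set.ncard_image_of_injOn hinjτ]
    -- root
    have hr_ne_p : r ≠ p := fun h => by rw [← h] at hp1; omega
    have hr_ne_lb : r ≠ lb := fun h => by rw [← h] at hlb_in; omega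
    obtain ⟨wr, hwr⟩ := hsurj r hr_ne_p hr_ne_lb
    have hQ : ∀ v : N.V, Relation.ReflTransGen N.arc r v →
        v = lb ∨ (v = p ∧ Relation.ReflTransGen N'.arc wr wq) ∨
        (v ≠ p ∧ v ≠ lb ∧ ∃ w, j w = v ∧ Relation.ReflTransGen N'.arc wr w) := by
      intro v hv
      induction hv with
      | refl => exact Or.inr (Or.inr ⟨hr_ne_p, hr_ne_lb, wr, hwr, Relation.ReflTransGen.refl⟩)
      | @tail u z hru huz ih =>
        rcases ih with rfl | ⟨rfl, hreachq⟩ | ⟨hup, hulb, w, hw, hreach⟩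
        · exact absurd huz (not_arc_of_outDeg_zero hlb_leaf z)
        · rcases hp_child z huz with rfl | rfl
          · refine Or.inr (Or.inr ⟨Ne.symm hp_ne_la, hlalb, wla, hwla, hreachq.tail ?_⟩)
            exact (harc wq wla).mpr (Or.inr ⟨by rw [hwq]; exact hq, by rw [hwla]; exact hpla⟩)
          · exact Or.inl rfl
        · by_cases hzlb : z = lb
          · exact Or.inl hzlb
          · by_cases hzp : z = p
            · subst hzp
              have huq : u = q := hq_uniq u huz
              have hwwq : w = wq := hj (by rw [hw, hwq, huq])
              exact Or.inr (Or.inl ⟨rfl, hwwq ▸ hreach⟩)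
            · obtain ⟨wz, hwz⟩ := hsurj z hzp hzlb
              refine Or.inr (Or.inr ⟨hzp, hzlb, wz, hwz, hreach.tail ?_⟩)
              exact (harc w wz).mpr (Or.inl (by rw [hw, hwz]; exact huz))
    have hroot' : ∃ w, N'.IsRoot w := by
      refine ⟨wr, ?_, fun w => ?_⟩
      · show N'.inDeg wr = 0
        rw [hdegIn, hwr]; exact hr0
      · rcases hQ (j w) (hrreach (j w)) with h | ⟨h, _⟩ | ⟨_, _, w', hw', hr⟩
        · exact absurd h (havoid w).2
        · exact absurd h (havoid w).1
        · rwa [hj hw'] at hr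
    -- tree-child
    have htc : N'.TreeChild := by
      intro w hw
      have hvnl : ¬ N.IsLeaf (j w) := by
        rw [IsLeaf] at hw ⊢
        rw [hdegOut] at hw
        exact hw
      obtain ⟨c, hc, hcret⟩ := hnorm.1 (j w) hvnl
      by_cases hcp : c = p
      · subst hcp
        refine ⟨wla, (harc w wla).mpr (Or.inr ⟨hc, by rw [hwla]; exact hpla⟩), ?_⟩
        rw [IsRet, hdegIn, hwla]
        omega
      · have hclb : c ≠ lb := fun h => (havoid w).1 (hlb_par _ (h ▸ hc))
        obtain ⟨wc, hwc⟩ := hsurj c hcp hclb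
        refine ⟨wc, (harc w wc).mpr (Or.inl (by rw [hwc]; exact hc)), ?_⟩
        rw [IsRet, hdegIn, hwc]
        exact hcret
    -- shortcuts
    have hsc : ∀ u v, ¬ N'.Shortcut u v := by
      rintro u v ⟨huv, hret, hpth⟩
      rw [IsRet, hdegIn] at hret
      have harcN : N.arc (j u) (j v) := by
        rcases (harc u v).mp huv with h | ⟨h1, h2⟩
        · exact h
        · exfalso
          rcases hp_child _ h2 with h3 | h3
          · rw [h3] at hret; omega
          · exact (havoid v).2 h3
      apply hnorm.2 (j u) (j v)
      refine ⟨harcN, hret, ?_⟩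
      refine Relation.TransGen.lift' j (fun x y hxy => ?_) _ _ hpth
      obtain ⟨hxy_arc, hne⟩ := hxy
      rcases (harc x y).mp hxy_arc with h | ⟨h1, h2⟩
      · exact Relation.TransGen.single ⟨h, fun ⟨e1, e2⟩ => hne ⟨hj e1, hj e2⟩⟩
      · refine (Relation.TransGen.single
          ⟨h1, fun he => (havoid v).1 he.2.symm⟩).tail
          ⟨h2, fun he => (havoid u).1 he.1.symm⟩
    exact ⟨transfer hN hg N' j hj hcompat (fun w => (havoid w).2) hdegIn hdegOut hpath
      hroot' ha hb hab, htc, hsc⟩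

end Cherry

end PhyloNet

namespace PhyloNet

section RetCherry

variable {α : Type} {N : PhyloNet α}

lemma exists_other_child [Finite N.V] {v x : N.V} (h : N.outDeg v = 2) (hx : N.arc v x) :
    ∃ y, N.arc v y ∧ y ≠ x ∧ ∀ z, N.arc v z → z = x ∨ z = y := by
  obtain ⟨c, d, hcd, hset⟩ := Set.ncard_eq_two.mp h
  have harc' : ∀ z, z ∈ ({c, d} : Set N.V) ↔ N.arc v z := by
    intro z; rw [← hset]; rfl
  have hxm : x ∈ ({c, d} : Set N.V) := (harc' x).mpr hx
  rcases hxm with rfl | hxd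
  · refine ⟨d, (harc' d).mp (by simp), Ne.symm hcd, fun z hz => ?_⟩
    have := (harc' z).mpr hz; simpa using this
  · rw [Set.mem_singleton_iff] at hxd
    subst hxd
    refine ⟨c, (harc' c).mp (by simp), hcd, fun z hz => ?_⟩
    have := (harc' z).mpr hz
    simp only [Set.mem_insert_iff, Set.mem_singleton_iff] at this
    tauto

lemma delRetCherry_case [DecidableEq α] {X : Finset α} {N N' : PhyloNet α}
    (hN : N.IsNetworkOn X) (hnorm : N.Normal) {a b : α}
    (ha : a ∈ X) (hb : b ∈ X) (hab : a ≠ b)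
    (hdel : N.DelRetCherry N' X a b) :
    N'.IsNetworkOn (X.erase b) ∧ N'.Normal := by
  classical
  have hfin : Finite N.V := hN.finiteV
  have hg : N.GoodDeg := goodDeg_of_two_leaves hN ha hb hab
  obtain ⟨pa, pb, gb, j, hpala, hpblb, hpbret, hpapb, hgbpb, hgbpa, hj, hcompat, hsurj₀,
    havoid₀, harc⟩ := hdel
  set la := N.leafMap a with hla_def
  set lb := N.leafMap b with hlb_def
  have havoid : ∀ w : N'.V, j w ≠ pa ∧ j w ≠ pb ∧ j w ≠ gb ∧ j w ≠ lb := by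
    intro w
    have := havoid₀ w
    simp only [Set.mem_insert_iff, Set.mem_singleton_iff, not_or] at this
    exact this
  have hsurj : ∀ v : N.V, v ≠ pa → v ≠ pb → v ≠ gb → v ≠ lb → ∃ w, j w = v := by
    intro v h1 h2 h3 h4
    apply hsurj₀ v
    simp only [Set.mem_insert_iff, Set.mem_singleton_iff, not_or]
    exact ⟨h1, h2, h3, h4⟩
  have hlalb : la ≠ lb := fun h => hab (hN.leaf_inj a ha b hb h)
  have hla_leaf : N.outDeg la = 0 := hN.leaf_isLeaf a ha
  have hlb_leaf : N.outDeg lb = 0 := hN.leaf_isLeaf b hb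
  have hla_in : N.inDeg la = 1 := by
    rcases hg la with ⟨h1, h2⟩ | ⟨h1, h2⟩ | ⟨h1, h2⟩ | ⟨h1, h2⟩ <;> omega
  have hlb_in : N.inDeg lb = 1 := by
    rcases hg lb with ⟨h1, h2⟩ | ⟨h1, h2⟩ | ⟨h1, h2⟩ | ⟨h1, h2⟩ <;> omega
  have hpbin : N.inDeg pb = 2 := hpbret
  have hpbout : N.outDeg pb = 1 := by
    rcases hg pb with ⟨h1, h2⟩ | ⟨h1, h2⟩ | ⟨h1, h2⟩ | ⟨h1, h2⟩ <;> omega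
  have hpb_child : ∀ z, N.arc pb z → z = lb := fun z hz => child_unique hpbout hz hpblb
  have hlapb : la ≠ pb := fun h => not_arc_of_outDeg_zero hla_leaf lb (h ▸ hpblb)
  have hpaout : N.outDeg pa = 2 := by
    have h2 := two_le_outDeg hpala hpapb hlapb
    rcases hg pa with ⟨h1, h2'⟩ | ⟨h1, h2'⟩ | ⟨h1, h2'⟩ | ⟨h1, h2'⟩ <;> omega
  have hpa_child : ∀ z, N.arc pa z → z = la ∨ z = pb :=
    fun z hz => child_pair hpaout hpala hpapb hlapb hz
  have hpb_par : ∀ z, N.arc z pb → z = pa ∨ z = gb :=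
    fun z hz => parent_pair hpbin hpapb hgbpb (Ne.symm hgbpa) hz
  have hlb_par : ∀ z, N.arc z lb → z = pb := fun z hz => parent_unique hlb_in hz hpblb
  have hla_par : ∀ z, N.arc z la → z = pa := fun z hz => parent_unique hla_in hz hpala
  -- distinctness
  have hpa_ne_pb : pa ≠ pb := fun h => no_self_arc hN.acyclic (h ▸ hpapb)
  have hgb_ne_pb : gb ≠ pb := fun h => no_self_arc hN.acyclic (h ▸ hgbpb)
  have hpa_ne_la : pa ≠ la := fun h => not_arc_of_outDeg_zero hla_leaf pb (h ▸ hpapb)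
  have hpa_ne_lb : pa ≠ lb := fun h => not_arc_of_outDeg_zero hlb_leaf pb (h ▸ hpapb)
  have hgb_ne_la : gb ≠ la := fun h => not_arc_of_outDeg_zero hla_leaf pb (h ▸ hgbpb)
  have hgb_ne_lb : gb ≠ lb := fun h => not_arc_of_outDeg_zero hlb_leaf pb (h ▸ hgbpb)
  have hpb_ne_lb : pb ≠ lb := fun h => not_arc_of_outDeg_zero hlb_leaf lb (h ▸ hpblb)
  -- gb cannot reach pa (otherwise (gb, pb) is a shortcut)
  have hnotreach : ¬ Relation.ReflTransGen N.arc gb pa := by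
    intro h
    have hkey : ∀ v, Relation.ReflTransGen N.arc gb v → v = pb ∨ v = lb ∨
        Relation.ReflTransGen (fun x y => N.arc x y ∧ ¬(x = gb ∧ y = pb)) gb v := by
      intro v hv
      induction hv with
      | refl => exact Or.inr (Or.inr Relation.ReflTransGen.refl)
      | @tail u z hru huz ih =>
        rcases ih with rfl | rfl | hpth
        · exact Or.inr (Or.inl (hpb_child z huz))
        · exact absurd huz (not_arc_of_outDeg_zero hlb_leaf z)
        · by_cases hzpb : z = pb
          · exact Or.inl hzpb
          · by_cases hzlb : z = lb
            · exact Or.inr (Or.inl hzlb)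
            · exact Or.inr (Or.inr (hpth.tail ⟨huz, fun he => hzpb he.2⟩))
    rcases hkey pa h with h' | h' | hpth
    · exact hpa_ne_pb h'
    · exact hpa_ne_lb h'
    · exact hnorm.2 gb pb ⟨hgbpb, hpbret,
        Relation.TransGen.tail' hpth ⟨hpapb, fun he => hgbpa he.1.symm⟩⟩
  obtain ⟨r, hr0, hrreach⟩ := hN.rooted
  -- pa is not the root
  have hpain : N.inDeg pa = 1 := by
    have h01 : N.inDeg pa = 0 ∨ N.inDeg pa = 1 := by
      rcases hg pa with ⟨h1, h2⟩ | ⟨h1, h2⟩ | ⟨h1, h2⟩ | ⟨h1, h2⟩ <;> omega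
    rcases h01 with h0 | h1
    · exfalso
      have hrpa : pa = r := eq_of_reach_inDeg_zero (hrreach pa) h0
      have hpareach : ∀ v, Relation.ReflTransGen N.arc pa v →
          v = pa ∨ v = la ∨ v = pb ∨ v = lb := by
        intro v hv
        induction hv with
        | refl => exact Or.inl rfl
        | @tail u z hru huz ih =>
          rcases ih with rfl | rfl | rfl | rfl
          · rcases hpa_child z huz with rfl | rfl
            · exact Or.inr (Or.inl rfl)
            · exact Or.inr (Or.inr (Or.inl rfl))
          · exact absurd huz (not_arc_of_outDeg_zero hla_leaf z)
          · exact Or.inr (Or.inr (Or.inr (hpb_child z huz)))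
          · exact absurd huz (not_arc_of_outDeg_zero hlb_leaf z)
      rcases hpareach gb (by rw [hrpa]; exact hrreach gb) with h' | h' | h' | h'
      · exact hgbpa h'
      · exact hgb_ne_la h'
      · exact hgb_ne_pb h'
      · exact hgb_ne_lb h'
    · exact h1
  obtain ⟨qa, hqa, hqa_uniq⟩ := exists_unique_parent hpain
  -- gb is a tree vertex
  have hgb_nret : N.inDeg gb ≠ 2 := by
    intro h2
    have hgbout1 : N.outDeg gb = 1 := by
      rcases hg gb with ⟨h1', h2'⟩ | ⟨h1', h2'⟩ | ⟨h1', h2'⟩ | ⟨h1', h2'⟩ <;> omega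
    have hgbnl : ¬ N.IsLeaf gb := fun h => not_arc_of_outDeg_zero h pb hgbpb
    obtain ⟨c, hc, hcret⟩ := hnorm.1 gb hgbnl
    have : c = pb := child_unique hgbout1 hc hgbpb
    exact hcret (this ▸ hpbret)
  have hgbout : N.outDeg gb = 2 := by
    have := outDeg_ne_zero hgbpb
    rcases hg gb with ⟨h1, h2⟩ | ⟨h1, h2⟩ | ⟨h1, h2⟩ | ⟨h1, h2⟩ <;> omega
  have hgbin : N.inDeg gb = 1 := by
    have h01 : N.inDeg gb = 0 ∨ N.inDeg gb = 1 := by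
      rcases hg gb with ⟨h1, h2⟩ | ⟨h1, h2⟩ | ⟨h1, h2⟩ | ⟨h1, h2⟩ <;> omega
    rcases h01 with h0 | h1
    · exfalso
      have hrgb : gb = r := eq_of_reach_inDeg_zero (hrreach gb) h0
      exact hnotreach (by rw [hrgb]; exact hrreach pa)
    · exact h1
  obtain ⟨qg, hqg, hqg_uniq⟩ := exists_unique_parent hgbin
  obtain ⟨cb, hgbcb, hcb_ne_pb, hgb_child⟩ := exists_other_child hgbout hgbpb
  -- cb is not a reticulation (tree-child at gb)
  have hcb_nret : ¬ N.IsRet cb := by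
    have hgbnl : ¬ N.IsLeaf gb := fun h => not_arc_of_outDeg_zero h pb hgbpb
    obtain ⟨c, hc, hcret⟩ := hnorm.1 gb hgbnl
    rcases hgb_child c hc with rfl | rfl
    · exact absurd hpbret hcret
    · exact hcret
  have hcb_in : N.inDeg cb = 1 := by
    have h1 := inDeg_ne_zero hgbcb
    have h2 : N.inDeg cb ≠ 2 := hcb_nret
    rcases hg cb with ⟨h1', h2'⟩ | ⟨h1', h2'⟩ | ⟨h1', h2'⟩ | ⟨h1', h2'⟩ <;> omega
  have hcb_par : ∀ z, N.arc z cb → z = gb := fun z hz => parent_unique hcb_in hz hgbcb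
  -- survivors
  have hcb_ne_pa : cb ≠ pa := fun h =>
    hnotreach (Relation.ReflTransGen.single (h ▸ hgbcb))
  have hcb_ne_gb : cb ≠ gb := fun h => no_self_arc hN.acyclic (h ▸ hgbcb)
  have hcb_ne_lb : cb ≠ lb := fun h => hgb_ne_pb (hlb_par gb (h ▸ hgbcb))
  have hcb_ne_la : cb ≠ la := fun h => hgbpa (hla_par gb (h ▸ hgbcb))
  obtain ⟨wcb, hwcb⟩ := hsurj cb hcb_ne_pa hcb_ne_pb hcb_ne_gb hcb_ne_lb
  have hqa_ne_pa : qa ≠ pa := fun h => no_self_arc hN.acyclic (h ▸ hqa)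
  have hqa_ne_pb : qa ≠ pb := fun h => hpa_ne_lb (hpb_child pa (h ▸ hqa))
  have hqa_ne_gb : qa ≠ gb := fun h =>
    hnotreach (Relation.ReflTransGen.single (h ▸ hqa))
  have hqa_ne_lb : qa ≠ lb := fun h => not_arc_of_outDeg_zero hlb_leaf pa (h ▸ hqa)
  obtain ⟨wqa, hwqa⟩ := hsurj qa hqa_ne_pa hqa_ne_pb hqa_ne_gb hqa_ne_lb
  have hqg_ne_pa : qg ≠ pa := fun h => by
    rcases hpa_child gb (h ▸ hqg) with h' | h'
    · exact hgb_ne_la h'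
    · exact hgb_ne_pb h'
  have hqg_ne_pb : qg ≠ pb := fun h => hgb_ne_lb (hpb_child gb (h ▸ hqg))
  have hqg_ne_gb : qg ≠ gb := fun h => no_self_arc hN.acyclic (h ▸ hqg)
  have hqg_ne_lb : qg ≠ lb := fun h => not_arc_of_outDeg_zero hlb_leaf gb (h ▸ hqg)
  obtain ⟨wqg, hwqg⟩ := hsurj qg hqg_ne_pa hqg_ne_pb hqg_ne_gb hqg_ne_lb
  obtain ⟨wla, hwla⟩ := hsurj la (Ne.symm hpa_ne_la) (hlapb) (Ne.symm hgb_ne_la) hlalb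
  -- arc lifting
  have hpath : ∀ u v, N'.arc u v → Relation.TransGen N.arc (j u) (j v) := by
    intro u v h
    rcases (harc u v).mp h with h1 | ⟨h1, h2⟩ | ⟨h1, h2⟩
    · exact Relation.TransGen.single h1
    · exact (Relation.TransGen.single h1).tail h2
    · exact (Relation.TransGen.single h1).tail h2
  -- degree preservation
  have hdegOut : ∀ w, N'.outDeg w = N.outDeg (j w) := by
    intro w
    obtain ⟨hwpa, hwpb, hwgb, hwlb⟩ := havoid w
    have hla_nC : la ∉ {u : N.V | N.arc (j w) u} := fun h => hwpa (hla_par _ h)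
    have hcb_nC : cb ∉ {u : N.V | N.arc (j w) u} := fun h => hwgb (hcb_par _ h)
    have hCimg : j '' {w' : N'.V | N'.arc w w'} =
        (fun u => if u = pa then la else if u = gb then cb else u) ''
          {u : N.V | N.arc (j w) u} := by
      ext z
      simp only [Set.mem_image, Set.mem_setOf_eq]
      constructor
      · rintro ⟨w', hw', rfl⟩
        rcases (harc w w').mp hw' with h1 | ⟨h1, h2⟩ | ⟨h1, h2⟩
        · exact ⟨j w', h1, by rw [if_neg (havoid w').1, if_neg (havoid w').2.2.1]⟩
        · have hjw' : j w' = la := by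
            rcases hpa_child _ h2 with h | h
            · exact h
            · exact absurd h (havoid w').2.1
          exact ⟨pa, h1, by rw [if_pos rfl, hjw']⟩
        · have hjw' : j w' = cb := by
            rcases hgb_child _ h2 with h | h
            · exact absurd h (havoid w').2.1
            · exact h
          exact ⟨gb, h1, by rw [if_neg hgbpa, if_pos rfl, hjw']⟩
      · rintro ⟨u, hu, rfl⟩
        by_cases hupa : u = pa
        · subst hupa
          rw [if_pos rfl]
          exact ⟨wla, (harc w wla).mpr (Or.inr (Or.inl ⟨hu, by rw [hwla]; exact hpala⟩)), hwla⟩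
        · by_cases hugb : u = gb
          · subst hugb
            rw [if_neg hupa, if_pos rfl]
            exact ⟨wcb, (harc w wcb).mpr (Or.inr (Or.inr ⟨hu, by rw [hwcb]; exact hgbcb⟩)),
              hwcb⟩
          · rw [if_neg hupa, if_neg hugb]
            have hupb : u ≠ pb := fun h => by
              rcases hpb_par _ (h ▸ hu) with h' | h'
              · exact hwpa h'
              · exact hwgb h'
            have hulb : u ≠ lb := fun h => hwpb (hlb_par _ (h ▸ hu))
            obtain ⟨w', hw'⟩ := hsurj u hupa hupb hugb hulb
            exact ⟨w', (harc w w').mpr (Or.inl (by rw [hw']; exact hu)), hw'⟩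
    show {u : N'.V | N'.arc w u}.ncard = {u : N.V | N.arc (j w) u}.ncard
    rw [← Set.ncard_image_of_injective {u : N'.V | N'.arc w u} hj, hCimg,
      Set.ncard_image_of_injOn (injOn_update2 hla_nC hcb_nC (Ne.symm hcb_ne_la))]
  have hdegIn : ∀ w, N'.inDeg w = N.inDeg (j w) := by
    intro w
    obtain ⟨hwpa, hwpb, hwgb, hwlb⟩ := havoid w
    have hinjτ : Set.InjOn (fun u => if u = pa then qa else if u = gb then qg else u)
        {u : N.V | N.arc u (j w)} := by
      intro x hx y hy h
      simp only [Set.mem_setOf_eq] at hx hy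
      simp only at h
      by_cases hxpa : x = pa
      · have hv : j w = la := by
          rcases hpa_child _ (hxpa ▸ hx) with h' | h'
          · exact h'
          · exact absurd h' hwpb
        have hy' : y = pa := hla_par y (hv ▸ hy)
        rw [hxpa, hy']
      · by_cases hxgb : x = gb
        · have hv : j w = cb := by
            rcases hgb_child _ (hxgb ▸ hx) with h' | h'
            · exact absurd h' hwpb
            · exact h'
          have hy' : y = gb := hcb_par y (hv ▸ hy)
          rw [hxgb, hy']
        · by_cases hypa : y = pa
          · have hv : j w = la := by
              rcases hpa_child _ (hypa ▸ hy) with h' | h'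
              · exact h'
              · exact absurd h' hwpb
            exact absurd (hla_par x (hv ▸ hx)) hxpa
          · by_cases hygb : y = gb
            · have hv : j w = cb := by
                rcases hgb_child _ (hygb ▸ hy) with h' | h'
                · exact absurd h' hwpb
                · exact h'
              exact absurd (hcb_par x (hv ▸ hx)) hxgb
            · rwa [if_neg hxpa, if_neg hxgb, if_neg hypa, if_neg hygb] at h
    have hPimg : j '' {u' : N'.V | N'.arc u' w} =
        (fun u => if u = pa then qa else if u = gb then qg else u) ''
          {u : N.V | N.arc u (j w)} := by
      ext z
      simp only [Set.mem_image, Set.mem_setOf_eq]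
      constructor
      · rintro ⟨u', hu', rfl⟩
        rcases (harc u' w).mp hu' with h1 | ⟨h1, h2⟩ | ⟨h1, h2⟩
        · exact ⟨j u', h1, by rw [if_neg (havoid u').1, if_neg (havoid u').2.2.1]⟩
        · exact ⟨pa, h2, by rw [if_pos rfl, hqa_uniq _ h1]⟩
        · exact ⟨gb, h2, by rw [if_neg hgbpa, if_pos rfl, hqg_uniq _ h1]⟩
      · rintro ⟨u, hu, rfl⟩
        by_cases hupa : u = pa
        · subst hupa
          rw [if_pos rfl]
          exact ⟨wqa, (harc wqa w).mpr (Or.inr (Or.inl ⟨by rw [hwqa]; exact hqa, hu⟩)), hwqa⟩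
        · by_cases hugb : u = gb
          · subst hugb
            rw [if_neg hupa, if_pos rfl]
            exact ⟨wqg, (harc wqg w).mpr (Or.inr (Or.inr ⟨by rw [hwqg]; exact hqg, hu⟩)),
              hwqg⟩
          · rw [if_neg hupa, if_neg hugb]
            have hupb : u ≠ pb := fun h => hwlb (hpb_child _ (h ▸ hu))
            have hulb : u ≠ lb := fun h => not_arc_of_outDeg_zero hlb_leaf _ (h ▸ hu)
            obtain ⟨w', hw'⟩ := hsurj u hupa hupb hugb hulb
            exact ⟨w', (harc w' w).mpr (Or.inl (by rw [hw']; exact hu)), hw'⟩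
    show {u : N'.V | N'.arc u w}.ncard = {u : N.V | N.arc u (j w)}.ncard
    rw [← Set.ncard_image_of_injective {u : N'.V | N'.arc u w} hj, hPimg,
      Set.ncard_image_of_injOn hinjτ]
  -- root
  have hr_ne_pa : r ≠ pa := fun h => by rw [← h] at hpain; omega
  have hr_ne_pb : r ≠ pb := fun h => by rw [← h] at hpbin; omega
  have hr_ne_gb : r ≠ gb := fun h => by rw [← h] at hgbin; omega
  have hr_ne_lb : r ≠ lb := fun h => by rw [← h] at hlb_in; omega
  obtain ⟨wr, hwr⟩ := hsurj r hr_ne_pa hr_ne_pb hr_ne_gb hr_ne_lb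
  have hQ : ∀ v : N.V, Relation.ReflTransGen N.arc r v →
      (v = pb ∨ v = lb) ∨ (v = pa ∧ Relation.ReflTransGen N'.arc wr wqa) ∨
      (v = gb ∧ Relation.ReflTransGen N'.arc wr wqg) ∨
      (v ≠ pa ∧ v ≠ pb ∧ v ≠ gb ∧ v ≠ lb ∧ ∃ w, j w = v ∧
        Relation.ReflTransGen N'.arc wr w) := by
    intro v hv
    induction hv with
    | refl =>
      exact Or.inr (Or.inr (Or.inr ⟨hr_ne_pa, hr_ne_pb, hr_ne_gb, hr_ne_lb, wr, hwr,
        Relation.ReflTransGen.refl⟩))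
    | @tail u z hru huz ih =>
      rcases ih with (rfl | rfl) | ⟨rfl, hrq⟩ | ⟨rfl, hrg⟩ | ⟨hupa, hupb, hugb, hulb, w, hw, hr'⟩
      · exact Or.inl (Or.inr (hpb_child z huz))
      · exact absurd huz (not_arc_of_outDeg_zero hlb_leaf z)
      · rcases hpa_child z huz with rfl | rfl
        · refine Or.inr (Or.inr (Or.inr ⟨Ne.symm hpa_ne_la, hlapb, Ne.symm hgb_ne_la,
            hlalb, wla, hwla, hrq.tail ?_⟩))
          exact (harc wqa wla).mpr (Or.inr (Or.inl ⟨by rw [hwqa]; exact hqa,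
            by rw [hwla]; exact hpala⟩))
        · exact Or.inl (Or.inl rfl)
      · rcases hgb_child z huz with rfl | rfl
        · exact Or.inl (Or.inl rfl)
        · refine Or.inr (Or.inr (Or.inr ⟨hcb_ne_pa, hcb_ne_pb, hcb_ne_gb, hcb_ne_lb,
            wcb, hwcb, hrg.tail ?_⟩))
          exact (harc wqg wcb).mpr (Or.inr (Or.inr ⟨by rw [hwqg]; exact hqg,
            by rw [hwcb]; exact hgbcb⟩))
      · by_cases hzpb : z = pb
        · exact Or.inl (Or.inl hzpb)
        · by_cases hzlb : z = lb
          · exact Or.inl (Or.inr hzlb)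
          · by_cases hzpa : z = pa
            · subst hzpa
              have huqa : u = qa := hqa_uniq u huz
              have hwwqa : w = wqa := hj (by rw [hw, hwqa, huqa])
              exact Or.inr (Or.inl ⟨rfl, hwwqa ▸ hr'⟩)
            · by_cases hzgb : z = gb
              · subst hzgb
                have huqg : u = qg := hqg_uniq u huz
                have hwwqg : w = wqg := hj (by rw [hw, hwqg, huqg])
                exact Or.inr (Or.inr (Or.inl ⟨rfl, hwwqg ▸ hr'⟩))
              · obtain ⟨wz, hwz⟩ := hsurj z hzpa hzpb hzgb hzlb
                refine Or.inr (Or.inr (Or.inr ⟨hzpa, hzpb, hzgb, hzlb, wz, hwz, hr'.tail ?_⟩))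
                exact (harc w wz).mpr (Or.inl (by rw [hw, hwz]; exact huz))
  have hroot' : ∃ w, N'.IsRoot w := by
    refine ⟨wr, ?_, fun w => ?_⟩
    · show N'.inDeg wr = 0
      rw [hdegIn, hwr]; exact hr0
    · rcases hQ (j w) (hrreach (j w)) with (h | h) | ⟨h, _⟩ | ⟨h, _⟩ |
        ⟨_, _, _, _, w', hw', hr'⟩
      · exact absurd h (havoid w).2.1
      · exact absurd h (havoid w).2.2.2
      · exact absurd h (havoid w).1
      · exact absurd h (havoid w).2.2.1
      · rwa [hj hw'] at hr'
  -- tree-child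
  have htc : N'.TreeChild := by
    intro w hw
    have hvnl : ¬ N.IsLeaf (j w) := by
      rw [IsLeaf] at hw ⊢
      rw [hdegOut] at hw
      exact hw
    obtain ⟨c, hc, hcret⟩ := hnorm.1 (j w) hvnl
    by_cases hcpa : c = pa
    · subst hcpa
      refine ⟨wla, (harc w wla).mpr (Or.inr (Or.inl ⟨hc, by rw [hwla]; exact hpala⟩)), ?_⟩
      rw [IsRet, hdegIn, hwla]
      omega
    · by_cases hcgb : c = gb
      · subst hcgb
        refine ⟨wcb, (harc w wcb).mpr (Or.inr (Or.inr ⟨hc, by rw [hwcb]; exact hgbcb⟩)), ?_⟩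
        rw [IsRet, hdegIn, hwcb]
        omega
      · by_cases hcpb : c = pb
        · exact absurd (hcpb ▸ hpbret) hcret
        · have hclb : c ≠ lb := fun h => (havoid w).2.1 (hlb_par _ (h ▸ hc))
          obtain ⟨wc, hwc⟩ := hsurj c hcpa hcpb hcgb hclb
          refine ⟨wc, (harc w wc).mpr (Or.inl (by rw [hwc]; exact hc)), ?_⟩
          rw [IsRet, hdegIn, hwc]
          exact hcret
  -- shortcuts
  have hsc : ∀ u v, ¬ N'.Shortcut u v := by
    rintro u v ⟨huv, hret, hpth⟩
    rw [IsRet, hdegIn] at hret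
    have harcN : N.arc (j u) (j v) := by
      rcases (harc u v).mp huv with h | ⟨h1, h2⟩ | ⟨h1, h2⟩
      · exact h
      · exfalso
        rcases hpa_child _ h2 with h3 | h3
        · rw [h3] at hret; omega
        · exact (havoid v).2.1 h3
      · exfalso
        rcases hgb_child _ h2 with h3 | h3
        · exact (havoid v).2.1 h3
        · rw [h3] at hret; rw [hcb_in] at hret; omega
    apply hnorm.2 (j u) (j v)
    refine ⟨harcN, hret, ?_⟩
    refine Relation.TransGen.lift' j (fun x y hxy => ?_) _ _ hpth
    obtain ⟨hxy_arc, hne⟩ := hxy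
    rcases (harc x y).mp hxy_arc with h | ⟨h1, h2⟩ | ⟨h1, h2⟩
    · exact Relation.TransGen.single ⟨h, fun ⟨e1, e2⟩ => hne ⟨hj e1, hj e2⟩⟩
    · exact (Relation.TransGen.single
        ⟨h1, fun he => (havoid v).1 he.2.symm⟩).tail
        ⟨h2, fun he => (havoid u).1 he.1.symm⟩
    · exact (Relation.TransGen.single
        ⟨h1, fun he => (havoid v).2.2.1 he.2.symm⟩).tail
        ⟨h2, fun he => (havoid u).2.2.1 he.1.symm⟩
  exact ⟨transfer hN hg N' j hj hcompat (fun w => (havoid w).2.2.2) hdegIn hdegOut hpath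
    hroot' ha hb hab, htc, hsc⟩

end RetCherry

end PhyloNet

open PhyloNet in
/-- Deleting the leaf `b` of a cherry, or the reticulation leaf `b`
of a reticulated cherry, of a normal network yields a normal network on `X − {b}`. -/
theorem deleting_leaf_normal {α : Type} [DecidableEq α] (X : Finset α) (N N' : PhyloNet α)
    (hN : N.IsNetworkOn X) (hnorm : N.Normal)
    (a b : α) (ha : a ∈ X) (hb : b ∈ X) (hab : a ≠ b)
    (hdel : N.DelCherry N' X a b ∨ N.DelRetCherry N' X a b) :
    N'.IsNetworkOn (X.erase b) ∧ N'.Normal := by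
  rcases hdel with h | h
  · exact delCherry_case hN hnorm ha hb hab h
  · exact delRetCherry_case hN hnorm ha hb hab h
end
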